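/- If G is a simple graph on n ≥ 2 vertices with at least one edge, then the largest Laplacian eigenvalue of G is at least Δ(G) + 1, where Δ(G) is the maximum degree. -/

import Mathlib

open SimpleGraph Finset Matrix

/-- Largest eigenvalue of a real matrix, as the supremum of its (real) eigenvalues. -/
noncomputable def maxEig {V : Type*} [Fintype V] (A : Matrix V V ℝ) : ℝ :=
  sSup {μ : ℝ | ∃ v : V → ℝ, v ≠ 0 ∧ A.mulVec v = μ • v}

/-- The eigenvalues of a real matrix with multiplicity, sorted increasingly
(the real roots of the characteristic polynomial). -/
noncomputable def eigsSorted {V : Type*} [Fintype V] [DecidableEq V]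
    (A : Matrix V V ℝ) : List ℝ :=
  A.charpoly.roots.sort (· ≤ ·)

/-- The second smallest eigenvalue (with multiplicity) of a real matrix. -/
noncomputable def secondEig {V : Type*} [Fintype V] [DecidableEq V]
    (A : Matrix V V ℝ) : ℝ :=
  (eigsSorted A).getD 1 0

/-- `G` has no triangles. -/
def TriangleFree {V : Type*} (G : SimpleGraph V) : Prop :=
  ∀ a b c : V, G.Adj a b → G.Adj b c → G.Adj c a → False

/-- `G` has no 4-cycles. -/
def C4Free {V : Type*} (G : SimpleGraph V) : Prop :=
  ∀ a b c d : V, a ≠ c → b ≠ d →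
    G.Adj a b → G.Adj b c → G.Adj c d → G.Adj d a → False

/-- `X` is a dominating set of `G`. -/
def IsDominatingSet {V : Type*} (G : SimpleGraph V) (X : Finset V) : Prop :=
  ∀ v : V, v ∉ X → ∃ u ∈ X, G.Adj u v

/-- The domination number of `G`. -/
noncomputable def domNum {V : Type*} [Fintype V] (G : SimpleGraph V) : ℕ :=
  sInf {k : ℕ | ∃ X : Finset V, IsDominatingSet G X ∧ X.card = k}

/-- Number of edges between `X` and its complement. -/
def crossEdges {V : Type*} [Fintype V] [DecidableEq V] (G : SimpleGraph V)
    [DecidableRel G.Adj] (X : Finset V) : ℕ :=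
  (Finset.univ.filter fun p : V × V => p.1 ∈ X ∧ p.2 ∉ X ∧ G.Adj p.1 p.2).card

theorem stmt_5 {n : ℕ} (hn : 2 ≤ n) (G : SimpleGraph (Fin n)) [DecidableRel G.Adj]
    (he : ∃ u v : Fin n, G.Adj u v) :
    (G.maxDegree : ℝ) + 1 ≤ maxEig (G.lapMatrix ℝ) := by
  classical
  haveI : NeZero n := ⟨by omega⟩
  set L := G.lapMatrix ℝ with hLdef
  have hL : L.IsHermitian := (G.posSemidef_lapMatrix ℝ).1
  set T : EuclideanSpace ℝ (Fin n) →ₗ[ℝ] EuclideanSpace ℝ (Fin n) := Matrix.toEuclideanLin L with hTdef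
  have hT : T.IsSymmetric := Matrix.isHermitian_iff_isSymmetric.mp hL
  -- the set of eigenvalues
  set S : Set ℝ := {μ : ℝ | ∃ v : Fin n → ℝ, v ≠ 0 ∧ L.mulVec v = μ • v} with hSdef
  -- bounded above via Gershgorin
  have hbdd : BddAbove S := by
    refine ⟨∑ k, (‖L k k‖ + ∑ j ∈ Finset.univ.erase k, ‖L k j‖), ?_⟩
    rintro μ ⟨v, hv, hveq⟩
    have hev : Module.End.HasEigenvalue (Matrix.toLin' L) μ := by
      apply Module.End.hasEigenvalue_of_hasEigenvector (x := v)
      refine ⟨Module.End.mem_eigenspace_iff.mpr ?_, hv⟩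
      simpa [Matrix.toLin'_apply] using hveq
    obtain ⟨k, hk⟩ := eigenvalue_mem_ball hev
    rw [Metric.mem_closedBall, Real.dist_eq] at hk
    have h1 : μ ≤ ‖L k k‖ + ∑ j ∈ Finset.univ.erase k, ‖L k j‖ := by
      have h2 := (abs_le.mp hk).2
      have h3 := le_abs_self (L k k)
      simp only [Real.norm_eq_abs] at h2 ⊢
      linarith
    refine h1.trans (Finset.single_le_sum (f := fun k => ‖L k k‖ + ∑ j ∈ Finset.univ.erase k, ‖L k j‖) (fun i _ => by positivity) (Finset.mem_univ k))
  have hμ0 := hT.hasEigenvalue_iSup_of_finiteDimensional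
  set μ0 : ℝ := ⨆ x : {x : EuclideanSpace ℝ (Fin n) // x ≠ 0},
      RCLike.re (inner (𝕜 := ℝ) (T x) (x : EuclideanSpace ℝ (Fin n))) / ‖(x : EuclideanSpace ℝ (Fin n))‖ ^ 2 with hμ0def
  have hμ0' : Module.End.HasEigenvalue T μ0 := by simpa using hμ0
  obtain ⟨v, hv_mem, hv_ne⟩ := hμ0'.exists_hasEigenvector
  have hμ0S : μ0 ∈ S := by
    refine ⟨(WithLp.equiv 2 (Fin n → ℝ)) v, ?_, ?_⟩
    · simpa using hv_ne
    · have heq : T v = μ0 • v := Module.End.mem_eigenspace_iff.mp hv_mem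
      calc L.mulVec ((WithLp.equiv 2 (Fin n → ℝ)) v)
          = (WithLp.equiv 2 (Fin n → ℝ)) (T v) := rfl
        _ = μ0 • (WithLp.equiv 2 (Fin n → ℝ)) v := by rw [heq]; rfl
  -- Rayleigh quotient is bounded above
  have hrb : BddAbove (Set.range fun x : {x : EuclideanSpace ℝ (Fin n) // x ≠ 0} =>
      RCLike.re (inner (𝕜 := ℝ) (T x) (x : EuclideanSpace ℝ (Fin n))) / ‖(x : EuclideanSpace ℝ (Fin n))‖ ^ 2) := by
    set Tc := LinearMap.toContinuousLinearMap T with hTc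
    refine ⟨‖Tc‖, ?_⟩
    rintro r ⟨x, rfl⟩
    have hx : (0:ℝ) < ‖(x : EuclideanSpace ℝ (Fin n))‖ ^ 2 :=
      pow_pos (norm_pos_iff.mpr x.2) 2
    rw [div_le_iff₀ hx]
    have h1 : RCLike.re (inner (𝕜 := ℝ) (T x) (x : EuclideanSpace ℝ (Fin n)))
        ≤ ‖T (x : EuclideanSpace ℝ (Fin n))‖ * ‖(x : EuclideanSpace ℝ (Fin n))‖ := by
      simpa using real_inner_le_norm (T (x : EuclideanSpace ℝ (Fin n))) (x : EuclideanSpace ℝ (Fin n))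
    have h2 : ‖T (x : EuclideanSpace ℝ (Fin n))‖ ≤ ‖Tc‖ * ‖(x : EuclideanSpace ℝ (Fin n))‖ :=
      Tc.le_opNorm (x : EuclideanSpace ℝ (Fin n))
    nlinarith [norm_nonneg (x : EuclideanSpace ℝ (Fin n)), norm_nonneg Tc]
  -- max degree vertex and test vector
  obtain ⟨u, hu⟩ := G.exists_maximal_degree_vertex
  obtain ⟨a, b, hab⟩ := he
  have hd1 : 1 ≤ G.maxDegree :=
    le_trans ((G.degree_pos_iff_exists_adj a).mpr ⟨b, hab⟩) (G.degree_le_maxDegree a)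
  set D : ℝ := (G.maxDegree : ℝ) with hDdef
  have hD1 : 1 ≤ D := by rw [hDdef]; exact_mod_cast hd1
  set x0 : Fin n → ℝ := fun w => if w = u then D else if G.Adj u w then -1 else 0 with hx0def
  set x0' : EuclideanSpace ℝ (Fin n) := (WithLp.equiv 2 (Fin n → ℝ)).symm x0 with hx0'def
  have hx0u : x0 u = D := by simp [hx0def]
  have hx0ne : x0' ≠ 0 := by
    intro h
    have h2 : x0 = 0 := by
      simpa [hx0'def] using congrArg (WithLp.equiv 2 (Fin n → ℝ)) h
    rw [funext_iff] at h2
    have := h2 u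
    rw [hx0u] at this
    simp at this
    linarith
  have hdegu : (G.degree u : ℝ) = D := by rw [hDdef, hu]
  have hsum1 : ∀ c : ℝ, ∑ j, (if G.Adj u j then c else 0) = D * c := by
    intro c
    rw [Finset.sum_ite, Finset.sum_const_zero, add_zero, Finset.sum_const, nsmul_eq_mul]
    rw [← hdegu]
    congr 2
    rw [SimpleGraph.degree, SimpleGraph.neighborFinset_eq_filter]
  -- norm computation
  have hNsum : ∑ i, x0 i * x0 i = D ^ 2 + D := by
    rw [← Finset.add_sum_erase _ _ (Finset.mem_univ u), hx0u]
    have hterm : ∀ i ∈ Finset.univ.erase u, x0 i * x0 i = if G.Adj u i then (1:ℝ) else 0 := by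
      intro i hi
      have hi' : i ≠ u := Finset.ne_of_mem_erase hi
      by_cases h : G.Adj u i <;> simp [hx0def, hi', h]
    rw [Finset.sum_congr rfl hterm, Finset.sum_erase _ (by simp), hsum1 1]
    ring
  have hnorm : ‖x0'‖ ^ 2 = D ^ 2 + D := by
    rw [← real_inner_self_eq_norm_sq, ← hNsum]
    rw [hx0'def, WithLp.equiv_symm_apply, PiLp.inner_apply]
    simp only [PiLp.toLp_apply, RCLike.inner_apply, conj_trivial]
  -- quadratic form lower bound
  have hx0adj : ∀ w, G.Adj u w → x0 w = -1 := by
    intro w hw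
    have hwu : w ≠ u := fun h => G.irrefl (h ▸ hw)
    simp [hx0def, hwu, hw]
  have hpoint : ∀ i j : Fin n,
      (if G.Adj i j ∧ i = u then (D+1)^2 else 0) + (if G.Adj i j ∧ j = u then (D+1)^2 else 0)
        ≤ (if G.Adj i j then (x0 i - x0 j)^2 else 0) := by
    intro i j
    by_cases hadj : G.Adj i j
    · rw [if_pos hadj]
      by_cases hi : i = u
      · have hadj' : G.Adj u j := hi ▸ hadj
        have hju : j ≠ u := fun h => G.irrefl (h ▸ hadj')
        rw [if_pos ⟨hadj, hi⟩, if_neg (fun h => hju h.2), hi, hx0u, hx0adj j hadj']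
        nlinarith [sq_nonneg (D+1)]
      · by_cases hj : j = u
        · have hadj' : G.Adj u i := hj ▸ hadj.symm
          rw [if_neg (fun h => hi h.2), if_pos ⟨hadj, hj⟩, hj, hx0u, hx0adj i hadj']
          nlinarith [sq_nonneg (D+1)]
        · rw [if_neg (fun h => hi h.2), if_neg (fun h => hj h.2)]
          simpa using sq_nonneg (x0 i - x0 j)
    · simp [hadj]
  have hQ : 2 * D * (D+1)^2 ≤ ∑ i, ∑ j, (if G.Adj i j then (x0 i - x0 j)^2 else 0) := by
    have hle : ∑ i, ∑ j, ((if G.Adj i j ∧ i = u then (D+1)^2 else 0) + (if G.Adj i j ∧ j = u then (D+1)^2 else 0))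
        ≤ ∑ i, ∑ j, (if G.Adj i j then (x0 i - x0 j)^2 else 0) :=
      Finset.sum_le_sum (fun i _ => Finset.sum_le_sum (fun j _ => hpoint i j))
    refine le_trans (le_of_eq ?_) hle
    have e1 : ∑ i, ∑ j, (if G.Adj i j ∧ i = u then (D+1)^2 else 0) = D * (D+1)^2 := by
      have : ∀ i : Fin n, ∑ j, (if G.Adj i j ∧ i = u then (D+1)^2 else 0)
          = if i = u then D * (D+1)^2 else 0 := by
        intro i
        by_cases hi : i = u
        · rw [if_pos hi]
          rw [← hsum1 ((D+1)^2)]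
          exact Finset.sum_congr rfl fun j _ => by simp [hi]
        · simp [hi]
      rw [Finset.sum_congr rfl (fun i _ => this i), Finset.sum_ite_eq' Finset.univ u, if_pos (Finset.mem_univ u)]
    have e2 : ∑ i, ∑ j, (if G.Adj i j ∧ j = u then (D+1)^2 else 0) = D * (D+1)^2 := by
      have inner2 : ∀ i : Fin n, ∑ j, (if G.Adj i j ∧ j = u then (D+1)^2 else 0)
          = if G.Adj u i then (D+1)^2 else 0 := by
        intro i
        have : ∀ j : Fin n, (if G.Adj i j ∧ j = u then (D+1)^2 else 0)
            = if j = u then (if G.Adj u i then (D+1)^2 else 0) else 0 := by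
          intro j
          by_cases hj : j = u
          · by_cases h : G.Adj i u
            · simp [hj, h, h.symm]
            · simp [hj, h, show ¬G.Adj u i from fun hh => h hh.symm]
          · simp [hj]
        rw [Finset.sum_congr rfl (fun j _ => this j), Finset.sum_ite_eq' Finset.univ u, if_pos (Finset.mem_univ u)]
      rw [Finset.sum_congr rfl (fun i _ => inner2 i), hsum1]
    simp_rw [Finset.sum_add_distrib]
    rw [e1, e2]; ring
  -- the inner product as the Laplacian quadratic form
  have hA : (inner (𝕜 := ℝ) (T x0') x0' : ℝ) = x0 ⬝ᵥ L.mulVec x0 := by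
    have hT0 : T x0' = (WithLp.equiv 2 (Fin n → ℝ)).symm (L.mulVec x0) := rfl
    rw [hT0]
    simp only [PiLp.inner_apply, RCLike.inner_apply, conj_trivial, hx0'def,
      WithLp.equiv_symm_apply, PiLp.toLp_apply, dotProduct]
  have hB : x0 ⬝ᵥ L.mulVec x0
      = (∑ i, ∑ j, (if G.Adj i j then (x0 i - x0 j)^2 else 0)) / 2 := by
    rw [← Matrix.toLinearMap₂'_apply', hLdef, SimpleGraph.lapMatrix_toLinearMap₂']
  -- Rayleigh quotient at the test vector
  have hray : D + 1 ≤ RCLike.re (inner (𝕜 := ℝ) (T x0') x0') / ‖x0'‖ ^ 2 := by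
    have hre : RCLike.re (inner (𝕜 := ℝ) (T x0') x0') = (inner (𝕜 := ℝ) (T x0') x0' : ℝ) := rfl
    rw [hre, hA, hB, hnorm]
    have hpos : (0:ℝ) < D ^ 2 + D := by nlinarith
    rw [le_div_iff₀ hpos]
    nlinarith [hQ]
  have hle : D + 1 ≤ μ0 := le_trans hray (le_ciSup hrb ⟨x0', hx0ne⟩)
  calc (G.maxDegree : ℝ) + 1 = D + 1 := by rw [hDdef]
    _ ≤ μ0 := hle
    _ ≤ maxEig (G.lapMatrix ℝ) := le_csSup hbdd hμ0S
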